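/- No geometric hyperplane of G₃ is properly contained in another: if A, B ∈ {C_p : p ≠ 0} ∪ {H_p : p ∈ (Z₂)⁶} and A ⊆ B, then A = B. -/
import Mathlib

set_option maxRecDepth 100000

/-- `V₃ = (ℤ₂)⁶`, vectors written `x = (a₁,a₂,a₃,b₁,b₂,b₃)`. -/
abbrev V : Type := Fin 6 → ZMod 2

/-- The standard symplectic form `⟨x,x'⟩ = Σᵢ (aᵢ bᵢ' + bᵢ aᵢ')`. -/
def sp (x y : V) : ZMod 2 :=
  (x 0 * y 3 + x 3 * y 0) + (x 1 * y 4 + x 4 * y 1) + (x 2 * y 5 + x 5 * y 2)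

/-- The quadratic form `Q₀(x) = Σᵢ aᵢ bᵢ`. -/
def Q0 (x : V) : ZMod 2 := x 0 * x 3 + x 1 * x 4 + x 2 * x 5

/-- The quadratic form `Q_p(x) = Q₀(x) + ⟨x,p⟩`. -/
def Qf (p x : V) : ZMod 2 := Q0 x + sp x p

/-- The symplectic transvection `T_p(x) = x + ⟨x,p⟩ p`. -/
def T (p x : V) : V := x + sp x p • p
/-- The perp set of `p`. -/
def Cset (p : V) : Set V := {x | x ≠ 0 ∧ sp p x = 0}

/-- The quadric hyperplane of `p`. -/
def Hset (p : V) : Set V := {x | x ≠ 0 ∧ Qf p x = 0}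

lemma k1 : ∀ p q : V, p ≠ 0 → q ≠ 0 → (∀ x : V, x ≠ 0 ∧ sp p x = 0 → x ≠ 0 ∧ sp q x = 0) →
    ∀ x : V, (x ≠ 0 ∧ sp q x = 0) → (x ≠ 0 ∧ sp p x = 0) := by decide
lemma k2 : ∀ p q : V, p ≠ 0 → (∀ x : V, x ≠ 0 ∧ sp p x = 0 → x ≠ 0 ∧ Qf q x = 0) →
    ∀ x : V, (x ≠ 0 ∧ Qf q x = 0) → (x ≠ 0 ∧ sp p x = 0) := by decide
lemma k3 : ∀ p q : V, q ≠ 0 → (∀ x : V, x ≠ 0 ∧ Qf p x = 0 → x ≠ 0 ∧ sp q x = 0) →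
    ∀ x : V, (x ≠ 0 ∧ sp q x = 0) → (x ≠ 0 ∧ Qf p x = 0) := by decide
lemma k4 : ∀ p q : V, (∀ x : V, x ≠ 0 ∧ Qf p x = 0 → x ≠ 0 ∧ Qf q x = 0) →
    ∀ x : V, (x ≠ 0 ∧ Qf q x = 0) → (x ≠ 0 ∧ Qf p x = 0) := by decide

/-- No geometric hyperplane of `G₃` is properly contained in another one. -/
theorem stmt14 (A B : Set V)
    (hA : (∃ p : V, p ≠ 0 ∧ A = Cset p) ∨ (∃ p : V, A = Hset p))
    (hB : (∃ p : V, p ≠ 0 ∧ B = Cset p) ∨ (∃ p : V, B = Hset p))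
    (hAB : A ⊆ B) : A = B := by
  apply Set.Subset.antisymm hAB
  rcases hA with ⟨p, hp, rfl⟩ | ⟨p, rfl⟩ <;> rcases hB with ⟨q, hq, rfl⟩ | ⟨q, rfl⟩ <;>
    intro x hx
  · exact k1 p q hp hq (fun y hy => hAB hy) x hx
  · exact k2 p q hp (fun y hy => hAB hy) x hx
  · exact k3 p q hq (fun y hy => hAB hy) x hx
  · exact k4 p q (fun y hy => hAB hy) x hx
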